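/- For each integer n ≥ 3, one has F_{2,n}(w) = G_n(w) − G_{n-1}(w+z) / (w(w+x)). -/
import Mathlib


open Finset MvPolynomial

noncomputable section

/-- The field of rational functions in three variables `w, x, z` over `ℚ`. -/
abbrev F3 : Type := FractionRing (MvPolynomial (Fin 3) ℚ)

/-- the variable `w` -/
def W : F3 := algebraMap (MvPolynomial (Fin 3) ℚ) F3 (X 0)
/-- the variable `x` -/
def Xv : F3 := algebraMap (MvPolynomial (Fin 3) ℚ) F3 (X 1)
/-- the variable `z` -/
def Zv : F3 := algebraMap (MvPolynomial (Fin 3) ℚ) F3 (X 2)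

/-- `G_n(w)`, defined by `G_1(w) = 1/w` and, for `n ≥ 2`,
`G_n(w) = ∑_{k=1}^{n-1} G_k(w) G_{n-k}(w+kz) / (w+(n-1)x)`. -/
def G : ℕ → F3 → F3
  | 0, _ => 0
  | 1, w => 1 / w
  | (n + 2), w =>
      ∑ k ∈ (Finset.Icc 1 (n + 1)).attach,
        G k.1 w * G (n + 2 - k.1) (w + (k.1 : F3) * Zv) / (w + ((n + 1 : ℕ) : F3) * Xv)
  termination_by n _ => n
  decreasing_by
  · have := Finset.mem_Icc.mp k.2; omega
  · have := Finset.mem_Icc.mp k.2; omega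

/-- `F_{k,n}(w)` for `1 ≤ k < n`, defined by `F_{1,n}(w) = G_n(w)` and, for `k ≥ 2`,
`F_{k,n}(w) = ∑_{i=1}^{n-k-1} G_{n-k-i}(w+(k+i)z) F_{k,k+i}(w) / (w+(n-1)x)
  + ∑_{i=1}^{k-1} (w+iz) G_i(w+x) F_{k-i,n-i}(w+iz) / (w(w+(n-1)x))`. -/
def Fkn : ℕ → ℕ → F3 → F3
  | 0, _, _ => 0
  | 1, n, w => G n w
  | (j + 2), n, w =>
      (∑ i ∈ (Finset.Icc 1 (n - (j + 2) - 1)).attach,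
        G (n - (j + 2) - i.1) (w + (((j + 2) + i.1 : ℕ) : F3) * Zv) * Fkn (j + 2) ((j + 2) + i.1) w /
          (w + ((n - 1 : ℕ) : F3) * Xv)) +
      ∑ i ∈ (Finset.Icc 1 (j + 1)).attach,
        (w + (i.1 : F3) * Zv) * G i.1 (w + Xv) * Fkn ((j + 2) - i.1) (n - i.1) (w + (i.1 : F3) * Zv) /
          (w * (w + ((n - 1 : ℕ) : F3) * Xv))
  termination_by k n _ => k + n
  decreasing_by
  · have := Finset.mem_Icc.mp i.2; omega
  · have := Finset.mem_Icc.mp i.2; omega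

set_option maxHeartbeats 1000000

lemma G_one (w : F3) : G 1 w = 1 / w := by rw [G]

lemma G_rec (n : ℕ) (hn : 2 ≤ n) (w : F3) :
    G n w = (∑ k ∈ Icc 1 (n - 1), G k w * G (n - k) (w + (k : F3) * Zv)) /
      (w + ((n - 1 : ℕ) : F3) * Xv) := by
  obtain ⟨m, rfl⟩ : ∃ m, n = m + 2 := ⟨n - 2, by omega⟩
  rw [G, Finset.sum_attach (Icc 1 (m + 1))
    (fun k => G k w * G (m + 2 - k) (w + (k : F3) * Zv) / (w + ((m + 1 : ℕ) : F3) * Xv)),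
    ← Finset.sum_div]
  norm_num

lemma nz (a b : ℕ) : W + (a : F3) * Xv + (b : F3) * Zv ≠ 0 := by
  have h : W + (a : F3) * Xv + (b : F3) * Zv
      = algebraMap (MvPolynomial (Fin 3) ℚ) F3
        (X 0 + (a : MvPolynomial (Fin 3) ℚ) * X 1 + (b : MvPolynomial (Fin 3) ℚ) * X 2) := by
    simp [W, Xv, Zv, map_add, map_mul, map_natCast]
  rw [h]
  intro hc
  have h0 : (X 0 + (a : MvPolynomial (Fin 3) ℚ) * X 1 + (b : MvPolynomial (Fin 3) ℚ) * X 2) = 0 :=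
    (IsFractionRing.injective (MvPolynomial (Fin 3) ℚ) F3) (by simpa using hc)
  have := congrArg (MvPolynomial.eval (fun i : Fin 3 => if i = 0 then (1 : ℚ) else 0)) h0
  simp at this

lemma nzZ (a b : ℕ) : W + (b : F3) * Zv + (a : F3) * Xv ≠ 0 := by
  have := nz a b; intro h; apply this; rw [← h]; ring

lemma hW : W ≠ 0 := by simpa using nz 0 0
lemma hWX : W + Xv ≠ 0 := by simpa using nz 1 0
lemma hWZ : W + Zv ≠ 0 := by simpa using nz 0 1
lemma hWaX (a : ℕ) : W + (a : F3) * Xv ≠ 0 := by simpa using nz a 0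

lemma peel1 (f : ℕ → F3) (m : ℕ) (hm : 1 ≤ m) :
    ∑ i ∈ Icc 1 (m - 1), f (1 + i) = (∑ k ∈ Icc 1 m, f k) - f 1 := by
  have h1 : Icc 1 m = insert 1 (Icc 2 m) := by
    ext a; simp only [Finset.mem_Icc, Finset.mem_insert]; omega
  have h3 : ∑ i ∈ Icc 2 m, f i = ∑ i ∈ Icc 1 (m - 1), f (1 + i) := by
    have e : Icc (1 + 1) (1 + (m - 1)) = Icc 2 m := by
      rw [show 1 + (m - 1) = m from by omega]
    rw [← e, ← Finset.map_add_left_Icc, Finset.sum_map]; rfl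
  rw [h1, Finset.sum_insert (by simp), h3]; ring

lemma peel2 (f : ℕ → F3) (m : ℕ) (hm : 2 ≤ m) :
    ∑ i ∈ Icc 1 (m - 2), f (2 + i) = (∑ k ∈ Icc 1 m, f k) - f 1 - f 2 := by
  have h1 : Icc 1 m = insert 1 (Icc 2 m) := by
    ext a; simp only [Finset.mem_Icc, Finset.mem_insert]; omega
  have h2 : Icc 2 m = insert 2 (Icc 3 m) := by
    ext a; simp only [Finset.mem_Icc, Finset.mem_insert]; omega
  have h3 : ∑ i ∈ Icc 3 m, f i = ∑ i ∈ Icc 1 (m - 2), f (2 + i) := by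
    have e : Icc (2 + 1) (2 + (m - 2)) = Icc 3 m := by
      rw [show 2 + (m - 2) = m from by omega]
    rw [← e, ← Finset.map_add_left_Icc, Finset.sum_map]; rfl
  rw [h1, Finset.sum_insert (by simp), h2, Finset.sum_insert (by simp), h3]; ring

lemma hG2 (w : F3) : G 2 w = 1 / (w * (w + Zv) * (w + Xv)) := by
  rw [G_rec 2 le_rfl w]
  norm_num [G_one, div_eq_mul_inv, mul_inv]
  ring

lemma Fkn_one (n : ℕ) (w : F3) : Fkn 1 n w = G n w := by rw [Fkn]

lemma Fkn_two (n : ℕ) (w : F3) :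
    Fkn 2 n w = (∑ i ∈ Icc 1 (n - 2 - 1),
        G (n - 2 - i) (w + ((2 + i : ℕ) : F3) * Zv) * Fkn 2 (2 + i) w /
          (w + ((n - 1 : ℕ) : F3) * Xv)) +
      (w + Zv) * (1 / (w + Xv)) * G (n - 1) (w + Zv) / (w * (w + ((n - 1 : ℕ) : F3) * Xv)) := by
  show Fkn (0 + 2) n w = _
  rw [Fkn]
  rw [Finset.sum_attach (Icc 1 (n - (0 + 2) - 1)) (fun i =>
    G (n - (0 + 2) - i) (w + (((0 + 2) + i : ℕ) : F3) * Zv) * Fkn (0 + 2) ((0 + 2) + i) w /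
      (w + ((n - 1 : ℕ) : F3) * Xv))]
  rw [Finset.sum_attach (Icc 1 (0 + 1)) (fun i : ℕ =>
    (w + (i : F3) * Zv) * G i (w + Xv) * Fkn ((0 + 2) - i) (n - i) (w + (i : F3) * Zv) /
      (w * (w + ((n - 1 : ℕ) : F3) * Xv)))]
  norm_num [G_one, Fkn_one]

lemma key (K : Type) [Field K] (W X Z A B P c : K)
    (hW : W ≠ 0) (hWX : W + X ≠ 0) (hWZ : W + Z ≠ 0) (hD : W + (c+2)*X ≠ 0) :
    ((W + (c+2)*X) * A - B/W - P/(W*(W+Z)*(W+X))) / (W + (c+2)*X)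
      - ((W + Z + (c+1)*X) * B - P/(W+Z)) / (W * (W+X) * (W + (c+2)*X))
      + (W+Z) * B / ((W+X) * (W * (W + (c+2)*X)))
    = A - B / (W * (W+X)) := by
  set D := W + (c+2)*X with hDdef
  have hE : W*(W+X)*(W+Z)*D ≠ 0 :=
    mul_ne_zero (mul_ne_zero (mul_ne_zero hW hWX) hWZ) hD
  apply mul_right_cancel₀ hE
  simp only [sub_div, div_div]
  have t1 : D*A/D * (W*(W+X)*(W+Z)*D) = A * (W*(W+X)*(W+Z)*D) := by
    rw [div_mul_eq_mul_div, div_eq_iff hD]; ring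
  have t2 : B/(W*D) * (W*(W+X)*(W+Z)*D) = B*((W+X)*(W+Z)) := by
    rw [div_mul_eq_mul_div, div_eq_iff (mul_ne_zero hW hD)]; ring
  have t3 : P/(W*(W+Z)*(W+X)*D) * (W*(W+X)*(W+Z)*D) = P := by
    rw [div_mul_eq_mul_div, div_eq_iff (mul_ne_zero (mul_ne_zero (mul_ne_zero hW hWZ) hWX) hD)]
    ring
  have t4 : (W+Z+(c+1)*X)*B/(W*(W+X)*D) * (W*(W+X)*(W+Z)*D) = (W+Z+(c+1)*X)*B*(W+Z) := by
    rw [div_mul_eq_mul_div, div_eq_iff (mul_ne_zero (mul_ne_zero hW hWX) hD)]; ring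
  have t5 : P/((W+Z)*(W*(W+X)*D)) * (W*(W+X)*(W+Z)*D) = P := by
    rw [div_mul_eq_mul_div, div_eq_iff (mul_ne_zero hWZ (mul_ne_zero (mul_ne_zero hW hWX) hD))]
    ring
  have t6 : (W+Z)*B/((W+X)*(W*D)) * (W*(W+X)*(W+Z)*D) = (W+Z)*B*((W+Z)) := by
    rw [div_mul_eq_mul_div, div_eq_iff (mul_ne_zero hWX (mul_ne_zero hW hD))]; ring
  have t7 : B/(W*(W+X)) * (W*(W+X)*(W+Z)*D) = B*((W+Z)*D) := by
    rw [div_mul_eq_mul_div, div_eq_iff (mul_ne_zero hW hWX)]; ring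
  linear_combination t1 - t2 - t3 - t4 + t5 + t6 + t7

lemma hWZX (a : ℕ) : W + Zv + (a : F3) * Xv ≠ 0 := by
  have := nzZ a 1; simpa using this

/-- For each `n ≥ 3`, `F_{2,n}(w) = G_n(w) - G_{n-1}(w+z) / (w(w+x))`. -/
theorem F_two_n (n : ℕ) (hn : 3 ≤ n) :
    Fkn 2 n W = G n W - G (n - 1) (W + Zv) / (W * (W + Xv)) := by
  revert hn
  induction n using Nat.strong_induction_on with
  | _ n IH =>
  intro hn
  obtain ⟨m, rfl⟩ : ∃ m, n = m + 3 := ⟨n - 3, by omega⟩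
  rw [Fkn_two]
  simp only [show m + 3 - 2 - 1 = m from by omega, show m + 3 - 1 = m + 2 from by omega,
    show m + 3 - 2 = m + 1 from by omega, show m + 1 - 1 = m from by omega]
  have hsum : ∀ i ∈ Icc 1 m,
      G (m + 1 - i) (W + ((2 + i : ℕ) : F3) * Zv) * Fkn 2 (2 + i) W /
        (W + ((m + 2 : ℕ) : F3) * Xv)
      = G (m + 1 - i) (W + ((2 + i : ℕ) : F3) * Zv) * G (2 + i) W /
          (W + ((m + 2 : ℕ) : F3) * Xv)
        - G (m + 1 - i) (W + ((2 + i : ℕ) : F3) * Zv) * G (1 + i) (W + Zv) /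
          (W * (W + Xv) * (W + ((m + 2 : ℕ) : F3) * Xv)) := by
    intro i hi
    have hi' := Finset.mem_Icc.mp hi
    rw [IH (2 + i) (by omega) (by omega), show 2 + i - 1 = 1 + i from by omega,
      mul_sub, sub_div, ← mul_div_assoc, div_div]
  rw [Finset.sum_congr rfl hsum, Finset.sum_sub_distrib, ← Finset.sum_div, ← Finset.sum_div]
  have hA : ∑ i ∈ Icc 1 m, G (m + 1 - i) (W + ((2 + i : ℕ) : F3) * Zv) * G (2 + i) W
      = (W + ((m + 2 : ℕ) : F3) * Xv) * G (m + 3) W - G (m + 2) (W + Zv) / W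
        - G (m + 1) (W + Zv + Zv) / (W * (W + Zv) * (W + Xv)) := by
    have hrec := G_rec (m + 3) (by omega) W
    rw [show m + 3 - 1 = m + 2 from by omega] at hrec
    have hS : ∑ k ∈ Icc 1 (m + 2), G k W * G (m + 3 - k) (W + (k : F3) * Zv)
        = (W + ((m + 2 : ℕ) : F3) * Xv) * G (m + 3) W := by
      rw [hrec, mul_div_cancel₀ _ (hWaX (m + 2))]
    have hp := peel2 (fun k => G k W * G (m + 3 - k) (W + (k : F3) * Zv)) (m + 2)
      (show 2 ≤ m + 2 by omega)
    simp only [show m + 2 - 2 = m from by omega] at hp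
    calc ∑ i ∈ Icc 1 m, G (m + 1 - i) (W + ((2 + i : ℕ) : F3) * Zv) * G (2 + i) W
        = ∑ i ∈ Icc 1 m, G (2 + i) W * G (m + 3 - (2 + i)) (W + ((2 + i : ℕ) : F3) * Zv) := by
          apply Finset.sum_congr rfl; intro i hi
          rw [show m + 3 - (2 + i) = m + 1 - i from by omega]; ring
      _ = _ := by
          rw [hp, hS, G_one, hG2,
            show m + 3 - 1 = m + 2 from by omega, show m + 3 - 2 = m + 1 from by omega,
            show W + ((1 : ℕ) : F3) * Zv = W + Zv from by push_cast; ring,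
            show W + ((2 : ℕ) : F3) * Zv = W + Zv + Zv from by push_cast; ring]
          simp only [one_div_mul_eq_div]
  have hB : ∑ i ∈ Icc 1 m, G (m + 1 - i) (W + ((2 + i : ℕ) : F3) * Zv) * G (1 + i) (W + Zv)
      = (W + Zv + ((m + 1 : ℕ) : F3) * Xv) * G (m + 2) (W + Zv)
        - G (m + 1) (W + Zv + Zv) / (W + Zv) := by
    have hrec := G_rec (m + 2) (by omega) (W + Zv)
    rw [show m + 2 - 1 = m + 1 from by omega] at hrec
    have hS : ∑ k ∈ Icc 1 (m + 1), G k (W + Zv) * G (m + 2 - k) (W + Zv + (k : F3) * Zv)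
        = (W + Zv + ((m + 1 : ℕ) : F3) * Xv) * G (m + 2) (W + Zv) := by
      rw [hrec, mul_div_cancel₀ _ (hWZX (m + 1))]
    have hp := peel1 (fun k => G k (W + Zv) * G (m + 2 - k) (W + Zv + (k : F3) * Zv)) (m + 1)
      (show 1 ≤ m + 1 by omega)
    simp only [show m + 1 - 1 = m from by omega] at hp
    calc ∑ i ∈ Icc 1 m, G (m + 1 - i) (W + ((2 + i : ℕ) : F3) * Zv) * G (1 + i) (W + Zv)
        = ∑ i ∈ Icc 1 m,
            G (1 + i) (W + Zv) * G (m + 2 - (1 + i)) (W + Zv + ((1 + i : ℕ) : F3) * Zv) := by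
          apply Finset.sum_congr rfl; intro i hi
          rw [show m + 2 - (1 + i) = m + 1 - i from by omega,
            show W + Zv + ((1 + i : ℕ) : F3) * Zv = W + ((2 + i : ℕ) : F3) * Zv from by
              push_cast; ring]
          ring
      _ = _ := by
          rw [hp, hS, G_one,
            show m + 2 - 1 = m + 1 from by omega,
            show W + Zv + ((1 : ℕ) : F3) * Zv = W + Zv + Zv from by push_cast; ring]
          simp only [one_div_mul_eq_div]
  rw [hA, hB]
  have hD := hWaX (m + 2)
  have h1 : ((m + 2 : ℕ) : F3) = (m : F3) + 2 := by push_cast; ring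
  have h2 : ((m + 1 : ℕ) : F3) = (m : F3) + 1 := by push_cast; ring
  rw [h1, h2]
  rw [h1] at hD
  rw [mul_one_div, div_mul_eq_mul_div, div_div]
  linear_combination key F3 W Xv Zv (G (m + 3) W) (G (m + 2) (W + Zv))
    (G (m + 1) (W + Zv + Zv)) ((m : ℕ) : F3) hW hWX hWZ hD

end
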